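/- For α, β ∈ ℂ with α ≠ β, the algebras B⁴₂₄(α) and B⁴₂₄(β) are not isomorphic as ℂ-algebras. -/
import Mathlib


noncomputable def mB424 (α : ℂ) : (Fin 4 → ℂ) →ₗ[ℂ] (Fin 4 → ℂ) →ₗ[ℂ] (Fin 4 → ℂ) :=
  LinearMap.mk₂ ℂ (fun u v =>
      ![0, u 0 * v 0, u 0 * v 1 + α * (u 1 * v 0),
        u 0 * v 2 + α * (u 1 * v 1) + α * (u 2 * v 0)])
    (fun x y v => by funext i; fin_cases i <;> simp <;> ring)
    (fun a x v => by funext i; fin_cases i <;> simp <;> ring)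
    (fun u x y => by funext i; fin_cases i <;> simp <;> ring)
    (fun u a x => by funext i; fin_cases i <;> simp <;> ring)

/-- For `α ≠ β`, the algebras `B⁴₂₄(α)` and `B⁴₂₄(β)` are not isomorphic. -/
theorem B424_pairwise_nonisomorphic (α β : ℂ) (h : α ≠ β) :
    ¬∃ φ : (Fin 4 → ℂ) ≃ₗ[ℂ] (Fin 4 → ℂ),
      ∀ u v : Fin 4 → ℂ, φ (mB424 α u v) = mB424 β (φ u) (φ v) := by
  rintro ⟨φ, hφ⟩
  set e1 : Fin 4 → ℂ := ![1,0,0,0] with he1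
  set e2 : Fin 4 → ℂ := ![0,1,0,0] with he2
  set e3 : Fin 4 → ℂ := ![0,0,1,0] with he3
  have hA1 : mB424 α e1 e1 = e2 := by
    funext i; fin_cases i <;> simp [mB424, he1, he2]
  have hA2 : mB424 α e1 e2 = e3 := by
    funext i; fin_cases i <;> simp [mB424, he1, he2, he3]
  have hA3 : mB424 α e2 e1 = α • e3 := by
    funext i; fin_cases i <;> simp [mB424, he1, he2, he3]
  set y : Fin 4 → ℂ := φ e1 with hy
  have hz : φ e2 = mB424 β y y := by rw [← hA1, hφ]
  set z : Fin 4 → ℂ := φ e2 with hzdef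
  have hw : φ e3 = mB424 β y z := by rw [← hA2, hφ]
  have hzy : α • φ e3 = mB424 β z y := by rw [← map_smul, ← hA3, hφ]
  have hz0 : z 0 = 0 := by rw [hz]; simp [mB424]
  have hz1 : z 1 = y 0 * y 0 := by rw [hz]; simp [mB424]
  by_cases hy0 : y 0 = 0
  · -- then φ e3 = 0, contradicting injectivity
    have hzero : φ e3 = 0 := by
      rw [hw]
      funext i; fin_cases i <;>
        simp [mB424, hy0, hz0, hz1]
    have : e3 = 0 := by
      have := φ.injective (hzero.trans (map_zero φ).symm)
      exact this
    have h2 : e3 2 = 0 := by rw [this]; rfl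
    simp [he3] at h2
  · -- compare index-2 components
    have hc1 : (φ e3) 2 = y 0 * z 1 + β * (y 1 * z 0) := by
      rw [hw]; simp [mB424]
    have hc2 : α * (φ e3) 2 = z 0 * y 1 + β * (z 1 * y 0) := by
      have := congrFun hzy 2
      simpa [mB424] using this
    rw [hc1, hz0, hz1] at hc2
    have : α * (y 0 * y 0 * y 0) = β * (y 0 * y 0 * y 0) := by
      linear_combination hc2
    have hne : y 0 * y 0 * y 0 ≠ 0 := by
      exact mul_ne_zero (mul_ne_zero hy0 hy0) hy0
    exact h (mul_right_cancel₀ hne this)
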